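/- Let (X, d, μ) be a metric measure space, p ≥ 1, J : ℝ≥0 → ℝ≥0 nondecreasing. Suppose X has Property A(J,p): for every n ∈ ℕ there is ψ_n : X → L^p(X,μ) with ‖ψ_{n,x}‖_p ≥ J(n), ‖ψ_{n,x} − ψ_{n,y}‖_p ≤ d(x,y), and ψ_{n,x} supported in the closed ball B(x,n). Fix o ∈ X and an increasing f : ℝ≥0 → ℝ≥0 with S := ∑_{k≥0} (f(2^k)/J(2^k))^p < ∞. Define F : X → ⊕_{ℓ^p} L^p(X,μ) by F(x) = ⊕_k (f(2^k)/J(2^k))(ψ_{2^k,x} − ψ_{2^k,o}). Then ‖F(x) − F(y)‖_p ≤ S^{1/p}·d(x,y) for all x,y, and ‖F(x) − F(y)‖_p ≥ 2^{1/p}·f(2^k) whenever d(x,y) > 2·2^k. -/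

import Mathlib

open MeasureTheory Metric ENNReal

theorem myNormRpow {X : Type*} [MeasurableSpace X] {μ : Measure X} {p : ℝ} (hp : 0 < p)
    [Fact (1 ≤ ENNReal.ofReal p)] (g : Lp ℝ (ENNReal.ofReal p) μ) :
    ‖g‖ ^ p = (∫⁻ a, (‖g a‖₊ : ℝ≥0∞) ^ p ∂μ).toReal := by
  have htop : ENNReal.ofReal p ≠ ∞ := ENNReal.ofReal_ne_top
  have h0 : ENNReal.ofReal p ≠ 0 := by simp [ENNReal.ofReal_eq_zero, not_le, hp]
  have htr : (ENNReal.ofReal p).toReal = p := ENNReal.toReal_ofReal hp.le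
  rw [Lp.norm_def, eLpNorm_eq_lintegral_rpow_enorm_toReal h0 htop]
  simp only [enorm_eq_nnnorm]
  rw [htr, ENNReal.toReal_rpow,
    ← ENNReal.rpow_mul, one_div, inv_mul_cancel₀ hp.ne', ENNReal.rpow_one]

theorem myLintNeTop {X : Type*} [MeasurableSpace X] {μ : Measure X} {p : ℝ} (hp : 0 < p)
    [Fact (1 ≤ ENNReal.ofReal p)] (g : Lp ℝ (ENNReal.ofReal p) μ) :
    (∫⁻ a, (‖g a‖₊ : ℝ≥0∞) ^ p ∂μ) ≠ ∞ := by
  have htop : ENNReal.ofReal p ≠ ∞ := ENNReal.ofReal_ne_top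
  have h0 : ENNReal.ofReal p ≠ 0 := by simp [ENNReal.ofReal_eq_zero, not_le, hp]
  have htr : (ENNReal.ofReal p).toReal = p := ENNReal.toReal_ofReal hp.le
  have := Lp.eLpNorm_ne_top g
  rw [eLpNorm_eq_lintegral_rpow_enorm_toReal h0 htop] at this
  simp only [enorm_eq_nnnorm] at this
  rw [htr] at this
  intro h
  rw [h] at this
  simp [ENNReal.top_rpow_of_pos (by positivity : (0:ℝ) < 1/p)] at this
  exact absurd this (not_le.mpr hp)

theorem myDisjNorm {X : Type*} [MeasurableSpace X] {μ : Measure X} {p : ℝ} (hp : 0 < p)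
    [Fact (1 ≤ ENNReal.ofReal p)] (g h : Lp ℝ (ENNReal.ofReal p) μ)
    (hd : ∀ᵐ z ∂μ, (g : X → ℝ) z = 0 ∨ (h : X → ℝ) z = 0) :
    ‖g - h‖ ^ p = ‖g‖ ^ p + ‖h‖ ^ p := by
  rw [myNormRpow hp, myNormRpow hp, myNormRpow hp]
  have hptw : ∀ᵐ z ∂μ, (‖(g - h : Lp ℝ (ENNReal.ofReal p) μ) z‖₊ : ℝ≥0∞) ^ p
      = (‖g z‖₊ : ℝ≥0∞) ^ p + (‖h z‖₊ : ℝ≥0∞) ^ p := by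
    filter_upwards [hd, Lp.coeFn_sub g h] with z hz hsub
    rw [hsub]
    rcases hz with hz | hz <;> simp [hz, ENNReal.zero_rpow_of_pos hp]
  rw [lintegral_congr_ae hptw, lintegral_add_left']
  · rw [ENNReal.toReal_add (myLintNeTop hp g) (myLintNeTop hp h)]
  · exact ((Lp.aestronglyMeasurable g).aemeasurable.nnnorm.coe_nnreal_ennreal).pow_const p

theorem stmt7 {X : Type*} [MetricSpace X] [MeasurableSpace X] (μ : Measure X)
    (p : ℝ) (hp : 1 ≤ p) [Fact (1 ≤ ENNReal.ofReal p)] (J : ℝ → ℝ) (hJ : Monotone J) (hJpos : ∀ t, 1 ≤ t → 0 < J t)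
    (ψ : ℕ → X → Lp ℝ (ENNReal.ofReal p) μ)
    (hnorm : ∀ (n : ℕ) (x : X), J n ≤ ‖ψ n x‖)
    (hlip : ∀ (n : ℕ) (x y : X), ‖ψ n x - ψ n y‖ ≤ dist x y)
    (hsupp : ∀ (n : ℕ) (x : X), ∀ᵐ z ∂μ, z ∉ closedBall x (n : ℝ) → (ψ n x : X → ℝ) z = 0)
    (o : X) (f : ℝ → ℝ) (hf : Monotone f) (hf0 : ∀ t, 0 ≤ f t) (S : ℝ)
    (hS : HasSum (fun k : ℕ => (f (2 ^ k) / J (2 ^ k)) ^ p) S) :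
    ∃ F : X → lp (fun _ : ℕ => Lp ℝ (ENNReal.ofReal p) μ) (ENNReal.ofReal p),
      (∀ (x : X) (k : ℕ),
        (F x : ∀ _ : ℕ, Lp ℝ (ENNReal.ofReal p) μ) k =
          (f (2 ^ k) / J (2 ^ k)) • (ψ (2 ^ k) x - ψ (2 ^ k) o)) ∧
      (∀ x y : X, ‖F x - F y‖ ≤ S ^ (1 / p) * dist x y) ∧
      (∀ (x y : X) (k : ℕ), 2 * 2 ^ k < dist x y →
        (2 : ℝ) ^ (1 / p) * f (2 ^ k) ≤ ‖F x - F y‖) := by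
  have hp0 : (0:ℝ) < p := lt_of_lt_of_le one_pos hp
  have htr : (ENNReal.ofReal p).toReal = p := ENNReal.toReal_ofReal hp0.le
  have hq0 : (ENNReal.ofReal p) ≠ 0 := by simp [ENNReal.ofReal_eq_zero, not_le, hp0]
  set c : ℕ → ℝ := fun k => f (2 ^ k) / J (2 ^ k) with hc
  have hJk : ∀ k : ℕ, (0:ℝ) < J (2 ^ k) := fun k =>
    hJpos _ (one_le_pow₀ (by norm_num))
  have hck : ∀ k, 0 ≤ c k := fun k => div_nonneg (hf0 _) (hJk k).le
  have hcast : ∀ k : ℕ, ((2 ^ k : ℕ) : ℝ) = 2 ^ k := by intro k; push_cast; ring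
  set g : X → ∀ _ : ℕ, Lp ℝ (ENNReal.ofReal p) μ :=
    fun x k => c k • (ψ (2 ^ k) x - ψ (2 ^ k) o) with hg
  -- coordinatewise norm bound
  have hbound : ∀ x y k, ‖c k • (ψ (2 ^ k) x - ψ (2 ^ k) y)‖ ^ p ≤ c k ^ p * dist x y ^ p := by
    intro x y k
    rw [norm_smul, Real.norm_eq_abs, abs_of_nonneg (hck k), ← Real.mul_rpow (hck k) dist_nonneg]
    exact Real.rpow_le_rpow (mul_nonneg (hck k) (norm_nonneg _))
      (mul_le_mul_of_nonneg_left (hlip _ x y) (hck k)) hp0.le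
  have hSnn : 0 ≤ S := hS.nonneg fun k => Real.rpow_nonneg (hck k) p
  have hmem : ∀ x, Memℓp (g x) (ENNReal.ofReal p) := by
    intro x
    apply memℓp_gen
    rw [htr]
    refine Summable.of_nonneg_of_le (fun k => Real.rpow_nonneg (norm_nonneg _) p)
      (fun k => hbound x o k) (hS.summable.mul_right (dist x o ^ p))
  set F : X → lp (fun _ : ℕ => Lp ℝ (ENNReal.ofReal p) μ) (ENNReal.ofReal p) :=
    fun x => ⟨g x, hmem x⟩ with hF
  have hcoord : ∀ x k, (F x : ∀ _ : ℕ, Lp ℝ (ENNReal.ofReal p) μ) k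
      = c k • (ψ (2 ^ k) x - ψ (2 ^ k) o) := fun x k => rfl
  have hsubc : ∀ x y k, ((F x - F y : lp _ _) : ∀ _ : ℕ, Lp ℝ (ENNReal.ofReal p) μ) k
      = c k • (ψ (2 ^ k) x - ψ (2 ^ k) y) := by
    intro x y k
    have : ((F x - F y : lp _ _) : ∀ _ : ℕ, Lp ℝ (ENNReal.ofReal p) μ) k
        = (F x : ∀ _ : ℕ, _) k - (F y : ∀ _ : ℕ, _) k := rfl
    rw [this, hcoord, hcoord, ← smul_sub]
    congr 1
    abel
  refine ⟨F, hcoord, ?_, ?_⟩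
  · -- Lipschitz upper bound
    intro x y
    have hC : 0 ≤ S ^ (1/p) * dist x y := by positivity
    apply lp.norm_le_of_tsum_le (by rw [htr]; exact hp0) hC
    rw [htr]
    have hCp : (S ^ (1/p) * dist x y) ^ p = S * dist x y ^ p := by
      rw [Real.mul_rpow (Real.rpow_nonneg hSnn _) dist_nonneg, ← Real.rpow_mul hSnn,
        one_div, inv_mul_cancel₀ hp0.ne', Real.rpow_one]
    rw [hCp, ← hS.tsum_eq, ← tsum_mul_right]
    refine Summable.tsum_le_tsum ?_ ?_ (hS.summable.mul_right _)
    · intro k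
      rw [hsubc]
      exact hbound x y k
    · have := (lp.memℓp (F x - F y)).summable (by rw [htr]; exact hp0)
      rw [htr] at this
      exact this
  · -- lower bound
    intro x y k hk
    have hdisj : ∀ᵐ z ∂μ, (ψ (2 ^ k) x : X → ℝ) z = 0 ∨ (ψ (2 ^ k) y : X → ℝ) z = 0 := by
      filter_upwards [hsupp (2 ^ k) x, hsupp (2 ^ k) y] with z h1 h2
      by_contra hcon
      push_neg at hcon
      have hzx : z ∈ closedBall x ((2 ^ k : ℕ) : ℝ) := by
        by_contra h; exact hcon.1 (h1 h)
      have hzy : z ∈ closedBall y ((2 ^ k : ℕ) : ℝ) := by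
        by_contra h; exact hcon.2 (h2 h)
      rw [mem_closedBall, hcast] at hzx hzy
      have : dist x y ≤ 2 * 2 ^ k := by
        calc dist x y ≤ dist x z + dist z y := dist_triangle x z y
        _ = dist z x + dist z y := by rw [dist_comm x z]
        _ ≤ 2 ^ k + 2 ^ k := add_le_add hzx hzy
        _ = 2 * 2 ^ k := by ring
      linarith
    have hnd : ‖ψ (2 ^ k) x - ψ (2 ^ k) y‖ ^ p
        = ‖ψ (2 ^ k) x‖ ^ p + ‖ψ (2 ^ k) y‖ ^ p := myDisjNorm hp0 _ _ hdisj
    have hJle : ∀ w : X, J (2 ^ k) ≤ ‖ψ (2 ^ k) w‖ := by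
      intro w
      have := hnorm (2 ^ k) w
      rwa [hcast] at this
    have h2J : 2 * J (2 ^ k) ^ p ≤ ‖ψ (2 ^ k) x - ψ (2 ^ k) y‖ ^ p := by
      rw [hnd, two_mul]
      exact add_le_add (Real.rpow_le_rpow (hJk k).le (hJle x) hp0.le)
        (Real.rpow_le_rpow (hJk k).le (hJle y) hp0.le)
    have hkey : (2:ℝ) ^ (1/p) * J (2 ^ k) ≤ ‖ψ (2 ^ k) x - ψ (2 ^ k) y‖ := by
      have := Real.rpow_le_rpow (mul_nonneg (by norm_num) (Real.rpow_nonneg (hJk k).le _)) h2J (by positivity : (0:ℝ) ≤ 1/p)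
      rwa [Real.mul_rpow (by norm_num) (Real.rpow_nonneg (hJk k).le _),
        ← Real.rpow_mul (hJk k).le, mul_one_div, div_self hp0.ne', Real.rpow_one,
        ← Real.rpow_mul (norm_nonneg _), mul_one_div, div_self hp0.ne', Real.rpow_one] at this
    calc (2:ℝ) ^ (1/p) * f (2 ^ k)
        = c k * ((2:ℝ) ^ (1/p) * J (2 ^ k)) := by
          rw [hc, mul_left_comm, div_mul_cancel₀ _ (hJk k).ne']
      _ ≤ c k * ‖ψ (2 ^ k) x - ψ (2 ^ k) y‖ :=
          mul_le_mul_of_nonneg_left hkey (hck k)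
      _ = ‖((F x - F y : lp _ _) : ∀ _ : ℕ, Lp ℝ (ENNReal.ofReal p) μ) k‖ := by
          rw [hsubc, norm_smul, Real.norm_eq_abs, abs_of_nonneg (hck k)]
      _ ≤ ‖F x - F y‖ := lp.norm_apply_le_norm hq0 _ k
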